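/- Let p be a prime with p ≥ 5, let a be an integer not divisible by p, and let d be an integer. Then q_p(a^d) ≡ d*q_p(a) + p*C(d,2)*q_p(a)^2 (mod p^2), where q_p(x) = (x^{p-1} - 1)/p is the Fermat quotient. -/

import Mathlib

lemma qp_norm_one_add {p : ℕ} [Fact p.Prime] {t : ℚ_[p]} (ht : ‖t‖ < 1) : ‖(1 : ℚ_[p]) + t‖ = 1 := by
  rw [Padic.add_eq_max_of_ne (by rw [norm_one]; exact (ne_of_lt ht).symm)]
  simp [le_of_lt ht]

lemma qp_norm_half {p : ℕ} [Fact p.Prime] (hp2 : p ≠ 2) (x : ℚ_[p]) : ‖x / 2‖ = ‖x‖ := by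
  have h2 : ‖((2 : ℤ) : ℚ_[p])‖ = 1 := by
    refine le_antisymm (Padic.norm_int_le_one _) ?_
    by_contra h
    push_neg at h
    rw [Padic.norm_intCast_lt_one_iff] at h
    rw [show ((2:ℤ)) = ((2:ℕ):ℤ) by norm_num, Int.natCast_dvd_natCast] at h
    exact hp2 ((Nat.prime_dvd_prime_iff_eq Fact.out Nat.prime_two).mp h)
  push_cast at h2
  rw [norm_div, h2, div_one]

lemma qp_key {p : ℕ} [Fact p.Prime] (hp2 : p ≠ 2) (t : ℚ_[p])
    (ht : ‖t‖ ≤ ((p : ℝ))⁻¹) (d : ℤ) :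
    ‖(1 + t) ^ d - 1 - (d : ℚ_[p]) * t - ((d : ℚ_[p]) * ((d : ℚ_[p]) - 1) / 2) * t ^ 2‖
      ≤ (p : ℝ) ^ (-3 : ℤ) := by
  have hp1 : (1 : ℝ) < p := by exact_mod_cast (Fact.out : p.Prime).one_lt
  have hpinv : ((p : ℝ))⁻¹ < 1 := inv_lt_one_of_one_lt₀ hp1
  have ht1 : ‖t‖ < 1 := lt_of_le_of_lt ht hpinv
  have h1t : ‖(1 : ℚ_[p]) + t‖ = 1 := qp_norm_one_add ht1
  have h1t0 : (1 : ℚ_[p]) + t ≠ 0 := by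
    intro h; rw [h, norm_zero] at h1t; norm_num at h1t
  set f : ℤ → ℚ_[p] := fun e =>
    (1 + t) ^ e - 1 - (e : ℚ_[p]) * t - ((e : ℚ_[p]) * ((e : ℚ_[p]) - 1) / 2) * t ^ 2 with hf
  have hcube : ∀ c : ℚ_[p], ‖c‖ ≤ 1 → ‖c * t ^ 3‖ ≤ (p : ℝ) ^ (-3 : ℤ) := by
    intro c hc
    rw [norm_mul, norm_pow]
    calc ‖c‖ * ‖t‖ ^ 3 ≤ 1 * ((p:ℝ)⁻¹) ^ 3 := by
          apply mul_le_mul hc (pow_le_pow_left₀ (norm_nonneg _) ht 3)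
            (by positivity) zero_le_one
      _ = (p : ℝ) ^ (-3 : ℤ) := by
          rw [one_mul, show ((-3:ℤ)) = -((3:ℕ):ℤ) by norm_num, zpow_neg, zpow_natCast, inv_pow]
  have hcoef : ∀ e : ℤ, ‖((e : ℚ_[p]) * ((e : ℚ_[p]) - 1) / 2)‖ ≤ 1 := by
    intro e
    rw [qp_norm_half hp2, norm_mul]
    have h1 : ‖(e : ℚ_[p])‖ ≤ 1 := Padic.norm_int_le_one e
    have h2 : ‖(e : ℚ_[p]) - 1‖ ≤ 1 := by
      have := Padic.norm_int_le_one (p := p) (e - 1)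
      push_cast at this; exact this
    calc ‖(e:ℚ_[p])‖ * ‖(e:ℚ_[p]) - 1‖ ≤ 1 * 1 :=
        mul_le_mul h1 h2 (norm_nonneg _) zero_le_one
      _ = 1 := by norm_num
  have step : ∀ e : ℤ,
      f (e + 1) = (1 + t) * f e + ((e : ℚ_[p]) * ((e : ℚ_[p]) - 1) / 2) * t ^ 3 := by
    intro e
    simp only [hf]
    push_cast
    rw [zpow_add_one₀ h1t0]
    ring
  show ‖f d‖ ≤ (p : ℝ) ^ (-3 : ℤ)
  induction d using Int.induction_on with
  | zero => simp [hf]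
  | succ n ih =>
      rw [step (n : ℤ)]
      refine le_trans (Padic.nonarchimedean _ _) (max_le ?_ ?_)
      · rw [norm_mul, h1t, one_mul]; exact ih
      · exact hcube _ (hcoef _)
  | pred n ih =>
      have hrel := step (-(n : ℤ) - 1)
      rw [show (-(n:ℤ) - 1 + 1) = -(n:ℤ) by ring] at hrel
      have heq : (1 + t) * f (-(n:ℤ) - 1)
          = f (-(n:ℤ)) - (((-(n:ℤ) - 1 : ℤ) : ℚ_[p]) * (((-(n:ℤ) - 1 : ℤ) : ℚ_[p]) - 1) / 2) * t ^ 3 := by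
        rw [eq_sub_iff_add_eq]; exact hrel.symm
      calc ‖f (-(n:ℤ) - 1)‖ = ‖(1 + t) * f (-(n:ℤ) - 1)‖ := by rw [norm_mul, h1t, one_mul]
        _ = ‖f (-(n:ℤ)) - (((-(n:ℤ) - 1 : ℤ) : ℚ_[p]) * (((-(n:ℤ) - 1 : ℤ) : ℚ_[p]) - 1) / 2) * t ^ 3‖ := by
            rw [heq]
        _ ≤ max ‖f (-(n:ℤ))‖ ‖(((-(n:ℤ) - 1 : ℤ) : ℚ_[p]) * (((-(n:ℤ) - 1 : ℤ) : ℚ_[p]) - 1) / 2) * t ^ 3‖ := by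
            rw [sub_eq_add_neg]
            refine le_trans (Padic.nonarchimedean _ _) ?_
            rw [norm_neg]
        _ ≤ (p : ℝ) ^ (-3 : ℤ) := max_le ih (hcube _ (hcoef _))

theorem stmt_2 (p : ℕ) [Fact p.Prime] (hp5 : 5 ≤ p) (a : ℤ) (ha : ¬ (p : ℤ) ∣ a) (d : ℤ) :
    ‖(((((a : ℚ) ^ d) ^ (p - 1) - 1) / p
        - ((d : ℚ) * (((a : ℚ) ^ (p - 1) - 1) / p)
          + p * ((d : ℚ) * (d - 1) / 2) * (((a : ℚ) ^ (p - 1) - 1) / p) ^ 2) : ℚ)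
      : ℚ_[p])‖ ≤ (p : ℝ) ^ (-2 : ℤ) := by
  have hprime : p.Prime := Fact.out
  have hp2 : p ≠ 2 := by omega
  have hp0 : (p : ℚ) ≠ 0 := by exact_mod_cast hprime.ne_zero
  have ha0 : (a : ℚ) ≠ 0 := by
    intro h
    apply ha
    have : a = 0 := by exact_mod_cast h
    simp [this]
  have hferm : (p : ℤ) ∣ a ^ (p - 1) - 1 := by
    have haz : (a : ZMod p) ≠ 0 := by
      rwa [Ne, ZMod.intCast_zmod_eq_zero_iff_dvd]
    have h1 := ZMod.pow_card_sub_one_eq_one haz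
    have h2 : ((a ^ (p - 1) - 1 : ℤ) : ZMod p) = 0 := by push_cast [h1]; ring
    rwa [ZMod.intCast_zmod_eq_zero_iff_dvd] at h2
  obtain ⟨m, hm⟩ := hferm
  have hq1 : ((a : ℚ) ^ (p - 1) - 1) / p = (m : ℚ) := by
    have h : (a : ℚ) ^ (p - 1) - 1 = p * m := by exact_mod_cast hm
    rw [h]; field_simp
  have hx : (a : ℚ) ^ (p - 1) = 1 + p * m := by
    have h : (a : ℚ) ^ (p - 1) - 1 = p * m := by exact_mod_cast hm
    linarith
  have hnat : ∀ k : ℕ, ((a:ℚ) ^ (k:ℤ)) ^ (p-1) = ((a:ℚ) ^ (p-1)) ^ (k:ℤ) := by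
    intro k; simp only [zpow_natCast]; exact pow_right_comm _ _ _
  have hcomm : ((a : ℚ) ^ d) ^ (p - 1) = ((a : ℚ) ^ (p - 1)) ^ d := by
    rcases Int.natAbs_eq d with h | h <;> rw [h]
    · exact hnat _
    · calc ((a:ℚ) ^ (-(d.natAbs:ℤ))) ^ (p-1) = (((a:ℚ) ^ (d.natAbs:ℤ))⁻¹) ^ (p-1) := by
            rw [zpow_neg]
        _ = (((a:ℚ) ^ (d.natAbs:ℤ)) ^ (p-1))⁻¹ := inv_pow _ _
        _ = (((a:ℚ) ^ (p-1)) ^ (d.natAbs:ℤ))⁻¹ := by rw [hnat]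
        _ = ((a:ℚ) ^ (p-1)) ^ (-(d.natAbs:ℤ)) := (zpow_neg _ _).symm
  rw [hcomm, hq1, hx]
  have hp0' : (p : ℚ_[p]) ≠ 0 := by
    exact_mod_cast (Nat.cast_ne_zero (R := ℚ_[p])).mpr hprime.ne_zero
  have hcast : (((((1 + (p:ℚ) * m) ^ d - 1) / p
        - ((d:ℚ) * m + p * ((d:ℚ) * ((d:ℚ) - 1) / 2) * (m:ℚ) ^ 2)) : ℚ) : ℚ_[p])
      = ((1 + (p:ℚ_[p]) * (m:ℚ_[p])) ^ d - 1 - (d:ℚ_[p]) * ((p:ℚ_[p]) * (m:ℚ_[p]))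
          - ((d:ℚ_[p]) * ((d:ℚ_[p]) - 1) / 2) * ((p:ℚ_[p]) * (m:ℚ_[p])) ^ 2) / (p:ℚ_[p]) := by
    push_cast
    field_simp
    ring
  have ht : ‖(p:ℚ_[p]) * (m:ℚ_[p])‖ ≤ ((p:ℝ))⁻¹ := by
    rw [norm_mul]
    have h1 : ‖(p : ℚ_[p])‖ = ((p:ℝ))⁻¹ := Padic.norm_p
    have h2 : ‖(m : ℚ_[p])‖ ≤ 1 := Padic.norm_int_le_one m
    calc ‖(p:ℚ_[p])‖ * ‖(m:ℚ_[p])‖ ≤ ‖(p:ℚ_[p])‖ * 1 :=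
          mul_le_mul_of_nonneg_left h2 (norm_nonneg _)
      _ = ((p:ℝ))⁻¹ := by rw [mul_one, h1]
  have hkey := qp_key hp2 ((p:ℚ_[p]) * (m:ℚ_[p])) ht d
  have hp0r : (0:ℝ) < p := by exact_mod_cast hprime.pos
  rw [hcast, norm_div, Padic.norm_p, div_eq_mul_inv, inv_inv]
  refine le_trans (mul_le_mul_of_nonneg_right hkey hp0r.le) ?_
  rw [show (-2:ℤ) = -3 + 1 by norm_num, zpow_add₀ (ne_of_gt hp0r), zpow_one]
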